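/- Let u : ℝ → ℝ be a continuously differentiable 2π-periodic function and q ≥ 1. Then (sup_{θ} |u(θ)|)^q − (inf_{θ} |u(θ)|)^q ≤ q · (∫_{-π}^{π} |u'(θ)|² dθ)^{1/2} · (∫_{-π}^{π} |u(θ)|^{2q−2} dθ)^{1/2}. -/

import Mathlib

open Real MeasureTheory intervalIntegral Set

lemma abs_sign_le_one (x : ℝ) : |Real.sign x| ≤ 1 := by
  rw [Real.sign]
  split_ifs <;> norm_num

lemma continuous_sign_mul_abs_rpow {r : ℝ} (hr : 0 < r) :
    Continuous (fun x : ℝ => Real.sign x * |x| ^ r) := by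
  have hco : Continuous (fun x : ℝ => |x| ^ r) :=
    continuous_abs.rpow_const fun _ => Or.inr hr.le
  rw [continuous_iff_continuousAt]
  intro x
  rcases lt_trichotomy x 0 with h | h | h
  · have hev : (fun y : ℝ => -(|y| ^ r)) =ᶠ[nhds x] fun y => Real.sign y * |y| ^ r := by
      filter_upwards [eventually_lt_nhds h] with y hy
      rw [Real.sign_of_neg hy, neg_one_mul]
    exact hco.neg.continuousAt.congr hev
  · subst h
    have hb : ∀ y : ℝ, ‖Real.sign y * |y| ^ r‖ ≤ |y| ^ r := by
      intro y
      rw [Real.norm_eq_abs, abs_mul, abs_of_nonneg (Real.rpow_nonneg (abs_nonneg y) r)]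
      exact mul_le_of_le_one_left (Real.rpow_nonneg (abs_nonneg y) r) (abs_sign_le_one y)
    have ht : Filter.Tendsto (fun y : ℝ => |y| ^ r) (nhds 0) (nhds 0) := by
      have := hco.tendsto 0
      rwa [abs_zero, Real.zero_rpow hr.ne'] at this
    have : Filter.Tendsto (fun y : ℝ => Real.sign y * |y| ^ r) (nhds 0) (nhds 0) :=
      squeeze_zero_norm hb ht
    simpa [ContinuousAt, Real.sign_zero] using this
  · have hev : (fun y : ℝ => |y| ^ r) =ᶠ[nhds x] fun y => Real.sign y * |y| ^ r := by
      filter_upwards [eventually_gt_nhds h] with y hy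
      rw [Real.sign_of_pos hy, one_mul]
    exact hco.continuousAt.congr hev

lemma my_hasDerivAt_abs_rpow {q : ℝ} (hq : 1 < q) (x : ℝ) :
    HasDerivAt (fun y : ℝ => |y| ^ q) (Real.sign x * |x| ^ (q - 1) * q) x := by
  rcases lt_trichotomy x 0 with h | h | h
  · have h1 : HasDerivAt (fun y : ℝ => (-y) ^ q) (q * (-x) ^ (q - 1) * (-1)) x :=
      (Real.hasDerivAt_rpow_const (p := q) (Or.inl (by linarith : -x ≠ 0))).comp x
        (hasDerivAt_neg x)
    have hev : (fun y : ℝ => |y| ^ q) =ᶠ[nhds x] fun y => (-y) ^ q := by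
      filter_upwards [eventually_lt_nhds h] with y hy
      rw [abs_of_neg hy]
    have h2 := h1.congr_of_eventuallyEq hev
    refine h2.congr_deriv ?_
    rw [Real.sign_of_neg h, abs_of_neg h]
    ring
  · subst h
    have h0 : Real.sign (0:ℝ) * |(0:ℝ)| ^ (q - 1) * q = 0 := by
      simp [Real.sign_zero]
    rw [h0, hasDerivAt_iff_tendsto_slope]
    apply squeeze_zero_norm' (a := fun y : ℝ => |y| ^ (q - 1))
    · filter_upwards [self_mem_nhdsWithin] with y hy
      have hy' : y ≠ 0 := hy
      have e : q - 1 + 1 = q := by ring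
      have habs : |y| ^ q = |y| ^ (q - 1) * |y| := by
        have h' := Real.rpow_add_one (abs_ne_zero.2 hy') (q - 1)
        rwa [e] at h'
      rw [slope_def_field]
      have h00 : |(0:ℝ)| ^ q = 0 := by
        rw [abs_zero, Real.zero_rpow (by linarith : q ≠ 0)]
      rw [h00, sub_zero, sub_zero, Real.norm_eq_abs, abs_div, abs_of_nonneg
        (Real.rpow_nonneg (abs_nonneg y) q), habs]
      rw [mul_div_assoc, div_self (abs_ne_zero.2 hy'), mul_one]
    · have hco : Continuous (fun x : ℝ => |x| ^ (q - 1)) :=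
        continuous_abs.rpow_const fun _ => Or.inr (by linarith)
      have := hco.tendsto 0
      rw [abs_zero, Real.zero_rpow (by linarith : q - 1 ≠ 0)] at this
      exact this.mono_left nhdsWithin_le_nhds
  · have h1 : HasDerivAt (fun y : ℝ => y ^ q) (q * x ^ (q - 1)) x :=
      Real.hasDerivAt_rpow_const (p := q) (Or.inl h.ne')
    have hev : (fun y : ℝ => |y| ^ q) =ᶠ[nhds x] fun y => y ^ q := by
      filter_upwards [eventually_gt_nhds h] with y hy
      rw [abs_of_pos hy]
    have h2 := h1.congr_of_eventuallyEq hev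
    refine h2.congr_deriv ?_
    rw [Real.sign_of_pos h, abs_of_pos h]
    ring

theorem stmt_12 (u : ℝ → ℝ) (hu : ContDiff ℝ 1 u) (hper : Function.Periodic u (2 * π))
    (q : ℝ) (hq : 1 ≤ q) :
    (⨆ θ : ℝ, |u θ|) ^ q - (⨅ θ : ℝ, |u θ|) ^ q ≤
      q * (∫ θ in (-π)..π, |deriv u θ| ^ 2) ^ ((1:ℝ)/2) *
        (∫ θ in (-π)..π, |u θ| ^ (2 * q - 2)) ^ ((1:ℝ)/2) := by
  have hc : Continuous u := hu.continuous
  have hc' : Continuous (deriv u) := hu.continuous_deriv le_rfl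
  have hd : Differentiable ℝ u := hu.differentiable one_ne_zero
  have h2pi : (0:ℝ) < 2 * π := Real.two_pi_pos
  have hpi : -π ≤ π := by linarith [Real.pi_pos]
  obtain ⟨θ₁, hθ₁mem, hθ₁⟩ := isCompact_Icc.exists_isMaxOn (Set.nonempty_Icc.2 hpi)
    (hc.abs.continuousOn (s := Set.Icc (-π) π))
  have hmax : ∀ θ, |u θ| ≤ |u θ₁| := by
    intro θ
    obtain ⟨y, hy, hy'⟩ := hper.exists_mem_Ico h2pi θ (-π)
    have hyI : y ∈ Set.Icc (-π) π := ⟨hy.1, by have := hy.2; linarith⟩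
    rw [hy']
    exact hθ₁ hyI
  obtain ⟨θ₂, hθ₂mem, hθ₂⟩ := isCompact_Icc.exists_isMinOn
    (Set.nonempty_Icc.2 (by linarith : θ₁ - 2*π ≤ θ₁))
    (hc.abs.continuousOn (s := Set.Icc (θ₁ - 2*π) θ₁))
  have hmin : ∀ θ, |u θ₂| ≤ |u θ| := by
    intro θ
    obtain ⟨y, hy, hy'⟩ := hper.exists_mem_Ico h2pi θ (θ₁ - 2*π)
    have hyI : y ∈ Set.Icc (θ₁ - 2*π) θ₁ := ⟨hy.1, by have := hy.2; linarith⟩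
    rw [hy']
    exact hθ₂ hyI
  have hsup : (⨆ θ : ℝ, |u θ|) = |u θ₁| :=
    le_antisymm (ciSup_le hmax) (le_ciSup ⟨|u θ₁|, Set.forall_mem_range.2 hmax⟩ θ₁)
  have hinf : (⨅ θ : ℝ, |u θ|) = |u θ₂| :=
    le_antisymm (ciInf_le ⟨0, Set.forall_mem_range.2 fun θ => abs_nonneg _⟩ θ₂) (le_ciInf hmin)
  rw [hsup, hinf]
  have hle : θ₂ ≤ θ₁ := hθ₂mem.2
  have hge : θ₁ - 2*π ≤ θ₂ := hθ₂mem.1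
  set F : ℝ → ℝ := fun θ => |deriv u θ| * |u θ| ^ (q - 1) with hF
  have hFc : Continuous F := hc'.abs.mul (hc.abs.rpow_const fun _ => Or.inr (by linarith))
  have hFnn : ∀ θ, 0 ≤ F θ :=
    fun θ => mul_nonneg (abs_nonneg _) (Real.rpow_nonneg (abs_nonneg _) _)
  have hFper : Function.Periodic F (2 * π) := by
    intro θ
    have hdper : deriv u (θ + 2 * π) = deriv u θ := by
      have h1 : deriv (fun y => u (y + 2*π)) θ = deriv u (θ + 2*π) :=
        deriv_comp_add_const u (2*π) θ
      have h2 : (fun y => u (y + 2*π)) = u := funext hper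
      rw [h2] at h1
      exact h1.symm
    simp only [hF, hdper, hper θ]
  have key : |u θ₁| ^ q - |u θ₂| ^ q ≤ ∫ θ in θ₂..θ₁, q * F θ := by
    rcases eq_or_lt_of_le hq with hq1 | hq1
    · -- q = 1
      have hFd : ∀ θ, q * F θ = |deriv u θ| := by
        intro θ
        rw [hF]
        simp only [← hq1]
        rw [show (1:ℝ) - 1 = 0 by ring, Real.rpow_zero, mul_one, one_mul]
      have hI : (∫ θ in θ₂..θ₁, q * F θ) = ∫ θ in θ₂..θ₁, |deriv u θ| := by
        simp only [hFd]
      rw [hI, ← hq1]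
      simp only [Real.rpow_one]
      calc |u θ₁| - |u θ₂| ≤ |u θ₁ - u θ₂| := abs_sub_abs_le_abs_sub _ _
        _ = |∫ θ in θ₂..θ₁, deriv u θ| := by
            rw [intervalIntegral.integral_deriv_eq_sub (fun x _ => hd x)
              (hc'.intervalIntegrable _ _)]
        _ ≤ ∫ θ in θ₂..θ₁, |deriv u θ| :=
            intervalIntegral.abs_integral_le_integral_abs hle
    · -- 1 < q
      have hg : ∀ θ, HasDerivAt (fun t => |u t| ^ q)
          ((Real.sign (u θ) * |u θ| ^ (q - 1) * q) * deriv u θ) θ :=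
        fun θ => (my_hasDerivAt_abs_rpow hq1 (u θ)).comp θ (hd θ).hasDerivAt
      have hg'c : Continuous (fun θ => (Real.sign (u θ) * |u θ| ^ (q - 1) * q) * deriv u θ) := by
        have h1 : Continuous (fun θ => Real.sign (u θ) * |u θ| ^ (q - 1)) :=
          (continuous_sign_mul_abs_rpow (by linarith : (0:ℝ) < q - 1)).comp hc
        exact (h1.mul continuous_const).mul hc'
      have hftc := intervalIntegral.integral_eq_sub_of_hasDerivAt
        (f := fun t => |u t| ^ q) (fun t _ => hg t) (hg'c.intervalIntegrable θ₂ θ₁)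
      rw [← hftc]
      apply intervalIntegral.integral_mono_on hle (hg'c.intervalIntegrable _ _)
        ((continuous_const.mul hFc).intervalIntegrable _ _)
      intro x _
      have hA : (0:ℝ) ≤ |u x| ^ (q - 1) := Real.rpow_nonneg (abs_nonneg _) _
      have hq0 : (0:ℝ) ≤ q := by linarith
      calc (Real.sign (u x) * |u x| ^ (q - 1) * q) * deriv u x
          ≤ |(Real.sign (u x) * |u x| ^ (q - 1) * q) * deriv u x| := le_abs_self _
        _ = |Real.sign (u x)| * (|u x| ^ (q - 1) * (q * |deriv u x|)) := by
            rw [abs_mul, abs_mul, abs_mul, abs_of_nonneg hA, abs_of_nonneg hq0]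
            ring
        _ ≤ 1 * (|u x| ^ (q - 1) * (q * |deriv u x|)) :=
            mul_le_mul_of_nonneg_right (abs_sign_le_one _)
              (by positivity)
        _ = q * F x := by rw [hF]; ring
  have step2 : (∫ θ in θ₂..θ₁, q * F θ) ≤ ∫ θ in (-π)..π, q * F θ := by
    have hint : ∀ a b : ℝ, IntervalIntegrable (fun θ => q * F θ) volume a b :=
      fun a b => (continuous_const.mul hFc).intervalIntegrable a b
    have hadd := intervalIntegral.integral_add_adjacent_intervals
      (hint (θ₁ - 2*π) θ₂) (hint θ₂ θ₁)
    have hp2 : Function.Periodic (fun θ => q * F θ) (2*π) := fun θ => by simp [hFper θ]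
    have hperInt := hp2.intervalIntegral_add_eq (θ₁ - 2*π) (-π)
    rw [show θ₁ - 2*π + 2*π = θ₁ by ring, show -π + 2*π = π by ring] at hperInt
    have h0 : 0 ≤ ∫ θ in (θ₁ - 2*π)..θ₂, q * F θ :=
      intervalIntegral.integral_nonneg hge (fun x _ => mul_nonneg (by linarith) (hFnn x))
    rw [← hperInt, ← hadd]
    linarith
  have step4 : (∫ θ in (-π)..π, F θ) ≤
      (∫ θ in (-π)..π, |deriv u θ| ^ 2) ^ ((1:ℝ)/2) *
        (∫ θ in (-π)..π, |u θ| ^ (2 * q - 2)) ^ ((1:ℝ)/2) := by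
    have hμfin : IsFiniteMeasure (volume.restrict (Set.Ioc (-π) π)) := by
      constructor
      rw [Measure.restrict_apply_univ]
      exact measure_Ioc_lt_top
    have hpq2 : Real.HolderConjugate 2 2 := Real.HolderConjugate.two_two
    have mem : ∀ f : ℝ → ℝ, Continuous f →
        MemLp f (ENNReal.ofReal 2) (volume.restrict (Set.Ioc (-π) π)) := by
      intro f hf
      obtain ⟨C, hC⟩ := (isCompact_Icc (a := -π) (b := π)).exists_bound_of_continuousOn
        hf.continuousOn
      refine MemLp.of_bound hf.aestronglyMeasurable C ?_
      refine (ae_restrict_iff' measurableSet_Ioc).2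
        (Filter.Eventually.of_forall fun x hx => hC x ⟨hx.1.le, hx.2⟩)
    have hH := MeasureTheory.integral_mul_le_Lp_mul_Lq_of_nonneg hpq2
      (μ := volume.restrict (Set.Ioc (-π) π))
      (f := fun θ => |deriv u θ|) (g := fun θ => |u θ| ^ (q - 1))
      (Filter.Eventually.of_forall fun θ => abs_nonneg _)
      (Filter.Eventually.of_forall fun θ => Real.rpow_nonneg (abs_nonneg _) _)
      (mem _ hc'.abs) (mem _ (hc.abs.rpow_const fun _ => Or.inr (by linarith)))
    have e0 : (∫ θ in (-π)..π, F θ)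
        = ∫ a, |deriv u a| * |u a| ^ (q - 1) ∂(volume.restrict (Set.Ioc (-π) π)) := by
      rw [intervalIntegral.integral_of_le hpi]
    have e1 : (∫ a, |deriv u a| ^ (2:ℝ) ∂(volume.restrict (Set.Ioc (-π) π)))
        = ∫ θ in (-π)..π, |deriv u θ| ^ 2 := by
      rw [intervalIntegral.integral_of_le hpi]
      congr 1
      funext θ
      rw [show (2:ℝ) = ((2:ℕ):ℝ) by norm_num, Real.rpow_natCast]
    have e2 : (∫ a, (|u a| ^ (q - 1)) ^ (2:ℝ) ∂(volume.restrict (Set.Ioc (-π) π)))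
        = ∫ θ in (-π)..π, |u θ| ^ (2 * q - 2) := by
      rw [intervalIntegral.integral_of_le hpi]
      congr 1
      funext θ
      rw [← Real.rpow_mul (abs_nonneg _), show (q - 1) * (2:ℝ) = 2 * q - 2 by ring]
    rw [e0]
    rw [e1, e2] at hH
    exact hH
  calc |u θ₁| ^ q - |u θ₂| ^ q ≤ ∫ θ in θ₂..θ₁, q * F θ := key
    _ ≤ ∫ θ in (-π)..π, q * F θ := step2
    _ = q * ∫ θ in (-π)..π, F θ := intervalIntegral.integral_const_mul q F
    _ ≤ q * ((∫ θ in (-π)..π, |deriv u θ| ^ 2) ^ ((1:ℝ)/2) *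
        (∫ θ in (-π)..π, |u θ| ^ (2 * q - 2)) ^ ((1:ℝ)/2)) :=
      mul_le_mul_of_nonneg_left step4 (by linarith)
    _ = q * (∫ θ in (-π)..π, |deriv u θ| ^ 2) ^ ((1:ℝ)/2) *
        (∫ θ in (-π)..π, |u θ| ^ (2 * q - 2)) ^ ((1:ℝ)/2) := by ring
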